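/- Let X be a compact Hausdorff space and φ : X → X a continuous surjection, and let α_φ : C(X) → C(X) be the endomorphism α_φ(a) = a ∘ φ. Then α_φ is of finite type — that is, there exist a transfer operator L for α_φ and a finite family u₁,…,u_N ∈ C(X) with a = ∑ᵢ uᵢ·α_φ(L(uᵢ*·a)) for all a ∈ C(X) — if and only if φ is a local homeomorphism. -/

import Mathlib

open scoped ComplexOrder

/-- `L` is a (unital, positive) transfer operator for the endomorphism
`a ↦ a ∘ φ` of `C(X, ℂ)`. -/
def IsTransferOpC {X : Type*} [TopologicalSpace X] (φ : C(X, X))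
    (L : C(X, ℂ) →ₗ[ℂ] C(X, ℂ)) : Prop :=
  L 1 = 1 ∧ (∀ f : C(X, ℂ), (∀ x, 0 ≤ f x) → ∀ x, 0 ≤ (L f) x) ∧
    ∀ f g : C(X, ℂ), L (f.comp φ * g) = f * L g

namespace Stmt3Aux

variable {X : Type*} [TopologicalSpace X]

/-- Lift of a real-valued continuous function to a complex-valued one. -/
noncomputable def toC (g : C(X, ℝ)) : C(X, ℂ) :=
  ⟨fun x => (g x : ℂ), Complex.continuous_ofReal.comp g.continuous⟩

@[simp] lemma toC_apply (g : C(X, ℝ)) (x : X) : toC g x = (g x : ℂ) := rfl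

lemma toC_sub (g h : C(X, ℝ)) : toC (g - h) = toC g - toC h := by
  ext x; simp [toC]

lemma toC_nonneg {g : C(X, ℝ)} (hg : ∀ x, 0 ≤ g x) (x : X) : 0 ≤ toC g x :=
  Complex.zero_le_real.2 (hg x)

section Forward

variable {φ : C(X, X)} {L : C(X, ℂ) →ₗ[ℂ] C(X, ℂ)}

/-- `L` of a real function is (pointwise) real. -/
lemma L_real (hp : ∀ f : C(X, ℂ), (∀ x, 0 ≤ f x) → ∀ x, 0 ≤ (L f) x)
    (g : C(X, ℝ)) (y : X) : (L (toC g) y).im = 0 := by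
  have h1 : 0 ≤ L (toC (g ⊔ 0)) y := hp _ (toC_nonneg fun x => by simp) y
  have h2 : 0 ≤ L (toC ((-g) ⊔ 0)) y := hp _ (toC_nonneg fun x => by simp) y
  have hg : toC g = toC (g ⊔ 0) - toC ((-g) ⊔ 0) := by
    rw [← toC_sub]
    congr 1
    ext x
    simp [max_zero_sub_max_neg_zero_eq_self]
  rw [hg, map_sub]
  simp only [ContinuousMap.sub_apply, Complex.sub_im]
  rw [← (Complex.nonneg_iff.1 h1).2, ← (Complex.nonneg_iff.1 h2).2, sub_zero]

lemma L_re_mono (hp : ∀ f : C(X, ℂ), (∀ x, 0 ≤ f x) → ∀ x, 0 ≤ (L f) x)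
    {q h : C(X, ℝ)} (hq : ∀ x, q x ≤ h x) (y : X) :
    (L (toC q) y).re ≤ (L (toC h) y).re := by
  have h0 : 0 ≤ L (toC (h - q)) y :=
    hp _ (toC_nonneg fun x => by simpa using sub_nonneg.2 (hq x)) y
  rw [toC_sub, map_sub] at h0
  have := (Complex.nonneg_iff.1 h0).1
  simp only [ContinuousMap.sub_apply, Complex.sub_re] at this
  linarith

/-- The key modulus inequality for the positive map `L`. -/
lemma abs_L_le (hp : ∀ f : C(X, ℂ), (∀ x, 0 ≤ f x) → ∀ x, 0 ≤ (L f) x)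
    {g : C(X, ℂ)} {h : C(X, ℝ)} (hgh : ∀ x, ‖g x‖ ≤ h x) (y : X) :
    ‖L g y‖ ≤ (L (toC h) y).re := by
  have hh0 : ∀ x, (0:ℝ) ≤ h x := fun x => le_trans (norm_nonneg _) (hgh x)
  have hLh : 0 ≤ (L (toC h) y).re := (Complex.nonneg_iff.1 (hp _ (toC_nonneg hh0) y)).1
  rcases eq_or_ne (L g y) 0 with h0 | h0
  · rw [h0, norm_zero]; exact hLh
  · set z := L g y with hz
    set c : ℂ := (starRingEnd ℂ) z / ((‖z‖ : ℝ) : ℂ) with hc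
    have habsz : (‖z‖ : ℝ) ≠ 0 := fun hh => h0 (norm_eq_zero.1 hh)
    have hcz : c * z = ((‖z‖ : ℝ) : ℂ) := by
      rw [hc, div_mul_eq_mul_div, mul_comm, Complex.mul_conj, Complex.normSq_eq_norm_sq]
      push_cast
      rw [pow_two, mul_div_assoc, div_self (by exact_mod_cast habsz), mul_one]
    have hc1 : ‖c‖ = 1 := by
      rw [hc, norm_div, Complex.norm_conj, Complex.norm_real, norm_norm,
        div_self habsz]
    set w : C(X, ℂ) := c • g with hw
    set q : C(X, ℝ) := ⟨fun x => (w x).re, Complex.continuous_re.comp w.continuous⟩ with hq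
    have hqh : ∀ x, q x ≤ h x := by
      intro x
      show (w x).re ≤ h x
      refine le_trans (Complex.re_le_norm _) ?_
      rw [hw]
      simp only [ContinuousMap.smul_apply, smul_eq_mul, norm_mul, hc1, one_mul]
      exact hgh x
    set s : C(X, ℝ) := ⟨fun x => (w x).im, Complex.continuous_im.comp w.continuous⟩ with hs
    have hwqs : w = toC q + Complex.I • toC s := by
      ext x
      simp only [ContinuousMap.add_apply, ContinuousMap.smul_apply, toC_apply, smul_eq_mul, hq, hs,
        ContinuousMap.coe_mk]
      rw [mul_comm, Complex.re_add_im]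
    have hre : (L w y).re = (L (toC q) y).re := by
      rw [hwqs, map_add, map_smul]
      simp only [ContinuousMap.add_apply, ContinuousMap.smul_apply, smul_eq_mul, Complex.add_re,
        Complex.mul_re, Complex.I_re, Complex.I_im]
      rw [L_real hp s y]
      ring
    have hfinal : (‖z‖ : ℝ) = (L (toC q) y).re := by
      have hLw : L w y = c * z := by rw [hw, map_smul]; rfl
      have : (c * z).re = (‖z‖ : ℝ) := by rw [hcz]; simp
      rw [← this, ← hLw, hre]
    rw [hfinal]
    exact L_re_mono hp hqh y

/-- `L f y` only depends on the values of `f` on the fiber over `y`. -/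
lemma L_vanish (hp : ∀ f : C(X, ℂ), (∀ x, 0 ≤ f x) → ∀ x, 0 ≤ (L f) x)
    (hT : ∀ f g : C(X, ℂ), L (f.comp φ * g) = f * L g) (hL1 : L 1 = 1)
    [CompactSpace X] [T2Space X]
    {y : X} {f : C(X, ℂ)} (hf : ∀ x, φ x = y → f x = 0) : L f y = 0 := by
  have habs : ∀ ε : ℝ, 0 < ε → ‖L f y‖ ≤ ε := by
    intro ε hε
    set U := {x | ‖f x‖ < ε} with hU
    have hUo : IsOpen U := isOpen_lt (continuous_norm.comp f.continuous) continuous_const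
    have hfib : ∀ x, φ x = y → x ∈ U := fun x hx => by
      simp only [hU, Set.mem_setOf_eq, hf x hx, norm_zero]; exact hε
    set K := ⇑φ '' Uᶜ with hK
    have hKc : IsClosed K := ((hUo.isClosed_compl.isCompact).image φ.continuous).isClosed
    have hyK : y ∉ K := by rintro ⟨x, hx, rfl⟩; exact hx (hfib x rfl)
    obtain ⟨g, hg0, hg1, hg01⟩ := exists_continuous_zero_one_of_isClosed hKc
      isClosed_singleton (Set.disjoint_singleton_right.mpr hyK)
    have key : L ((toC g).comp φ * f) y = L f y := by
      rw [hT (toC g) f]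
      have : g y = 1 := hg1 rfl
      simp [this]
    have hb : ∀ x, ‖((toC g).comp φ * f) x‖ ≤ (ContinuousMap.const X ε) x := by
      intro x
      simp only [ContinuousMap.mul_apply, ContinuousMap.comp_apply, toC_apply,
        ContinuousMap.const_apply, norm_mul, Complex.norm_real, Real.norm_eq_abs]
      by_cases hx : x ∈ U
      · have h1 : |g (φ x)| ≤ 1 := by
          rcases hg01 (φ x) with ⟨ha, hb⟩; rw [abs_le]; constructor <;> linarith
        calc |g (φ x)| * ‖f x‖ ≤ 1 * ε :=
              mul_le_mul h1 (le_of_lt hx) (norm_nonneg _) one_pos.le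
          _ = ε := one_mul ε
      · have : φ x ∈ K := ⟨x, hx, rfl⟩
        rw [hg0 this]
        simp [hε.le]
    have hmain := abs_L_le hp hb y
    rw [key] at hmain
    have hconst : toC (ContinuousMap.const X ε) = (ε : ℂ) • (1 : C(X, ℂ)) := by
      ext x; simp [toC]
    rw [hconst, map_smul, hL1] at hmain
    simpa using hmain
  have h0 : ‖L f y‖ ≤ 0 := by
    by_contra hcon
    push_neg at hcon
    have := habs (‖L f y‖ / 2) (by linarith)
    linarith
  exact norm_eq_zero.1 (le_antisymm h0 (norm_nonneg _))

/-- Lower bound for the mass of an atom. -/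
lemma atom_lb [CompactSpace X]
    (hp : ∀ f : C(X, ℂ), (∀ x, 0 ≤ f x) → ∀ x, 0 ≤ (L f) x)
    {N : ℕ} {u : Fin N → C(X, ℂ)}
    (hqb : ∀ a : C(X, ℂ), a = ∑ i, u i * ((L (star (u i) * a)).comp φ))
    {x y : X} (hxy : φ x = y) {a : C(X, ℝ)} (ha1 : a x = 1)
    (h01 : ∀ z, 0 ≤ a z ∧ a z ≤ 1) :
    1 ≤ (∑ i, ‖u i‖ ^ 2) * (L (toC a) y).re := by
  have hev := ContinuousMap.congr_fun (hqb (toC a)) x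
  simp only [ContinuousMap.coe_sum, Finset.sum_apply, ContinuousMap.mul_apply,
    ContinuousMap.comp_apply, toC_apply, ha1, Complex.ofReal_one, hxy] at hev
  have hre : 0 ≤ (L (toC a) y).re :=
    (Complex.nonneg_iff.1 (hp _ (toC_nonneg fun z => (h01 z).1) y)).1
  calc (1:ℝ) = ‖(1:ℂ)‖ := by simp
    _ = ‖∑ i, u i x * L (star (u i) * toC a) y‖ := by rw [← hev]
    _ ≤ ∑ i, ‖u i x * L (star (u i) * toC a) y‖ := norm_sum_le _ _
    _ ≤ ∑ i, ‖u i‖ ^ 2 * (L (toC a) y).re := by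
        apply Finset.sum_le_sum
        intro i _
        rw [norm_mul]
        have h1 : ‖u i x‖ ≤ ‖u i‖ := by
          have := (u i).norm_coe_le_norm x
          exact this
        have h2 : ‖L (star (u i) * toC a) y‖ ≤ (L (toC (‖u i‖ • a)) y).re := by
          apply abs_L_le hp
          intro z
          simp only [ContinuousMap.mul_apply, ContinuousMap.smul_apply, smul_eq_mul,
            ContinuousMap.star_apply, toC_apply, norm_mul, RCLike.star_def, Complex.norm_conj]
          calc ‖u i z‖ * ‖((a z : ℂ))‖
              = ‖u i z‖ * a z := by
                rw [Complex.norm_real, Real.norm_eq_abs, abs_of_nonneg (h01 z).1]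
            _ ≤ ‖u i‖ * a z := by
                apply mul_le_mul_of_nonneg_right ?_ (h01 z).1
                have := (u i).norm_coe_le_norm z
                exact this
        have h3 : (L (toC (‖u i‖ • a)) y).re = ‖u i‖ * (L (toC a) y).re := by
          have hsm : toC (‖u i‖ • a) = (‖u i‖ : ℂ) • toC a := by
            ext z; simp [toC]
          rw [hsm, map_smul]
          simp only [ContinuousMap.smul_apply, smul_eq_mul]
          rw [Complex.re_ofReal_mul]
        rw [pow_two, mul_assoc]
        exact mul_le_mul h1 (h2.trans_eq h3)
          (norm_nonneg _) (norm_nonneg _)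
    _ = (∑ i, ‖u i‖ ^ 2) * (L (toC a) y).re := (Finset.sum_mul _ _ _).symm

lemma fiber_finite [CompactSpace X] [T2Space X]
    (hp : ∀ f : C(X, ℂ), (∀ x, 0 ≤ f x) → ∀ x, 0 ≤ (L f) x)
    (hT : ∀ f g : C(X, ℂ), L (f.comp φ * g) = f * L g) (hL1 : L 1 = 1)
    {N : ℕ} {u : Fin N → C(X, ℂ)}
    (hqb : ∀ a : C(X, ℂ), a = ∑ i, u i * ((L (star (u i) * a)).comp φ))
    (y : X) : (⇑φ ⁻¹' {y}).Finite := by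
  by_contra hinf
  have hinf' : (⇑φ ⁻¹' {y}).Infinite := hinf
  set M : ℝ := ∑ i, ‖u i‖ ^ 2 with hM
  have hM0 : 0 ≤ M := Finset.sum_nonneg fun i _ => sq_nonneg _
  obtain ⟨S, hS_sub, hS_fin, hS_card⟩ := hinf'.exists_subset_ncard_eq (⌊M⌋₊ + 1)
  set t := hS_fin.toFinset with ht
  have htmem : ∀ z ∈ t, φ z = y := fun z hz => hS_sub (hS_fin.mem_toFinset.1 hz)
  obtain ⟨V, hV, hVd⟩ := hS_fin.t2_separation
  have hus : ∀ z : X, z ∈ S → ∃ a : C(X, ℝ),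
      a z = 1 ∧ (∀ w, w ∉ V z → a w = 0) ∧ ∀ w, 0 ≤ a w ∧ a w ≤ 1 := by
    intro z hz
    obtain ⟨a, h0, h1, h01⟩ := exists_continuous_zero_one_of_isClosed
      (hV z).2.isClosed_compl isClosed_singleton
      (Set.disjoint_singleton_right.mpr (fun hmem => hmem (hV z).1))
    exact ⟨a, h1 rfl, fun w hw => h0 hw, fun w => ⟨(h01 w).1, (h01 w).2⟩⟩
  choose a ha1 ha0 ha01 using hus
  have key : ∀ z (hz : z ∈ t), 1 ≤ M * (L (toC (a z (hS_fin.mem_toFinset.1 hz))) y).re :=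
    fun z hz => atom_lb hp hqb (htmem z hz) (ha1 _ _) (ha01 _ _)
  -- the sum of the bumps is at most 1 pointwise
  have hsum_le : ∀ w, (∑ z ∈ t.attach, a z (hS_fin.mem_toFinset.1 z.2) w) ≤ 1 := by
    intro w
    by_cases hw : ∃ z : {x // x ∈ t}, a z (hS_fin.mem_toFinset.1 z.2) w ≠ 0
    · obtain ⟨z0, hz0w⟩ := hw
      have hwV : w ∈ V ↑z0 := by
        by_contra hcon; exact hz0w (ha0 _ _ w hcon)
      rw [Finset.sum_eq_single_of_mem z0 (Finset.mem_attach _ _)]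
      · exact (ha01 _ (hS_fin.mem_toFinset.1 z0.2) w).2
      · intro z hz hne
        apply ha0
        intro hmem
        have hzS : (z : X) ∈ S := hS_fin.mem_toFinset.1 z.2
        have hz0S : (z0 : X) ∈ S := hS_fin.mem_toFinset.1 z0.2
        have hzz0 : (z : X) ≠ (z0 : X) := fun h => hne (Subtype.ext h)
        exact Set.disjoint_left.1 (hVd hzS hz0S hzz0) hmem hwV
    · push_neg at hw
      rw [Finset.sum_congr rfl fun z _ => hw z]
      simp
  -- hence the sum of masses is at most 1
  have hmass_le : (∑ z ∈ t.attach, (L (toC (a z (hS_fin.mem_toFinset.1 z.2))) y).re) ≤ 1 := by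
    set b : C(X, ℝ) := ∑ z ∈ t.attach, a z (hS_fin.mem_toFinset.1 z.2) with hb
    have hbpt : ∀ w, b w = ∑ z ∈ t.attach, a z (hS_fin.mem_toFinset.1 z.2) w := by
      intro w; rw [hb]; simp [ContinuousMap.coe_sum, Finset.sum_apply]
    have h1b : ∀ w, 0 ≤ ((1:C(X,ℝ)) - b) w := by
      intro w
      simp only [ContinuousMap.sub_apply, ContinuousMap.one_apply]
      rw [hbpt w]; linarith [hsum_le w]
    have h0 : 0 ≤ L (toC ((1:C(X,ℝ)) - b)) y := hp _ (toC_nonneg h1b) y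
    have hsplit : toC ((1:C(X,ℝ)) - b) = 1 - toC b := by ext w; simp [toC]
    have hbC : toC b = ∑ z ∈ t.attach, toC (a z (hS_fin.mem_toFinset.1 z.2)) := by
      ext w
      simp only [toC_apply, ContinuousMap.coe_sum, Finset.sum_apply, hbpt w]
      push_cast; rfl
    rw [hsplit, map_sub, hL1, hbC, map_sum] at h0
    have := (Complex.nonneg_iff.1 h0).1
    simp only [ContinuousMap.sub_apply, ContinuousMap.sum_apply, ContinuousMap.one_apply,
      Complex.sub_re, Complex.one_re, Complex.re_sum] at this
    linarith
  -- combine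
  have hcard : (t.card : ℝ) ≤ M := by
    have h1 : (t.card : ℝ) = ∑ _z ∈ t.attach, (1:ℝ) := by simp
    have h2 : (∑ _z ∈ t.attach, (1:ℝ)) ≤ ∑ z ∈ t.attach, M * (L (toC (a z (hS_fin.mem_toFinset.1 z.2))) y).re :=
      Finset.sum_le_sum fun z _ => key z z.2
    have h3 : (∑ z ∈ t.attach, M * (L (toC (a z (hS_fin.mem_toFinset.1 z.2))) y).re)
        = M * ∑ z ∈ t.attach, (L (toC (a z (hS_fin.mem_toFinset.1 z.2))) y).re := by
      rw [Finset.mul_sum]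
    have h4 : M * (∑ z ∈ t.attach, (L (toC (a z (hS_fin.mem_toFinset.1 z.2))) y).re) ≤ M * 1 :=
      mul_le_mul_of_nonneg_left hmass_le hM0
    rw [h1]
    calc (∑ _z ∈ t.attach, (1:ℝ)) ≤ _ := h2
      _ = _ := h3
      _ ≤ M * 1 := h4
      _ = M := mul_one M
  have hcard' : t.card = ⌊M⌋₊ + 1 := by
    rw [ht, ← Set.ncard_eq_toFinset_card S hS_fin]; exact hS_card
  rw [hcard'] at hcard
  have := Nat.lt_floor_add_one M
  push_cast at hcard
  linarith

lemma forward [CompactSpace X] [T2Space X] (φ : C(X, X)) (L : C(X, ℂ) →ₗ[ℂ] C(X, ℂ))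
    (N : ℕ) (u : Fin N → C(X, ℂ))
    (hL1 : L 1 = 1)
    (hp : ∀ f : C(X, ℂ), (∀ x, 0 ≤ f x) → ∀ x, 0 ≤ (L f) x)
    (hT : ∀ f g : C(X, ℂ), L (f.comp φ * g) = f * L g)
    (hqb : ∀ a : C(X, ℂ), a = ∑ i, u i * ((L (star (u i) * a)).comp φ)) :
    IsLocalHomeomorph (⇑φ) := by
  classical
  have hfin : ∀ y : X, (⇑φ ⁻¹' {y}).Finite := fiber_finite hp hT hL1 hqb
  -- bump functions on fibers
  have hbump : ∀ y z : X, ∃ a : C(X, ℝ), (φ z = y → a z = 1) ∧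
      (∀ w, φ w = y → w ≠ z → a w = 0) ∧ ∀ w, 0 ≤ a w ∧ a w ≤ 1 := by
    intro y z
    have hcl : IsClosed ((⇑φ ⁻¹' {y}) \ {z}) :=
      (((hfin y).subset Set.diff_subset)).isClosed
    obtain ⟨a, h0, h1, h01⟩ := exists_continuous_zero_one_of_isClosed hcl
      isClosed_singleton (Set.disjoint_singleton_right.mpr (fun h => h.2 rfl))
    refine ⟨a, fun _ => h1 rfl, fun w hw hwz => h0 ⟨hw, hwz⟩, fun w => ⟨(h01 w).1, (h01 w).2⟩⟩
  choose bump hbump1 hbump0 hbump01 using hbump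
  -- the atomic masses
  set m : X → X → ℂ := fun y z => L (toC (bump y z)) y with hm
  -- atomic decomposition of L at y
  have hdecomp : ∀ (y : X) (f : C(X, ℂ)),
      L f y = ∑ z ∈ (hfin y).toFinset, f z * m y z := by
    intro y f
    have hvan : L (f - ∑ z ∈ (hfin y).toFinset, f z • toC (bump y z)) y = 0 := by
      apply L_vanish hp hT hL1
      intro w hw
      have hwF : w ∈ (hfin y).toFinset := (hfin y).mem_toFinset.2 hw
      simp only [ContinuousMap.sub_apply, ContinuousMap.sum_apply, ContinuousMap.smul_apply,
        toC_apply, smul_eq_mul]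
      rw [Finset.sum_eq_single_of_mem w hwF]
      · rw [hbump1 y w hw]; simp
      · intro z hz hne
        rw [hbump0 y z w hw hne.symm]  -- careful: bump y z w = 0 needs w ≠ z
        simp
    rw [map_sub, map_sum] at hvan
    have : ∀ z ∈ (hfin y).toFinset, (L (f z • toC (bump y z))) y = f z * m y z := by
      intro z _
      rw [map_smul]
      simp [hm]
    simp only [ContinuousMap.sub_apply, ContinuousMap.sum_apply] at hvan
    rw [Finset.sum_congr rfl this] at hvan
    exact sub_eq_zero.1 hvan
  set M : ℝ := ∑ i, ‖u i‖ ^ 2 with hMdef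
  have hM0 : 0 ≤ M := Finset.sum_nonneg fun i _ => sq_nonneg _
  -- positivity of atoms
  have hm_re : ∀ y z : X, 0 ≤ (m y z).re ∧ (m y z).im = 0 := by
    intro y z
    have h := hp _ (toC_nonneg fun w => (hbump01 y z w).1) y
    exact ⟨(Complex.nonneg_iff.1 h).1, ((Complex.nonneg_iff.1 h).2).symm⟩
  have hm_pos : ∀ y z : X, φ z = y → 0 < (m y z).re := by
    intro y z hzy
    have hlb : 1 ≤ M * (m y z).re :=
      atom_lb hp hqb hzy (hbump1 y z hzy) (hbump01 y z)
    nlinarith [(hm_re y z).1]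
  have hm_ne : ∀ y z : X, φ z = y → m y z ≠ 0 := by
    intro y z hzy h0
    have := hm_pos y z hzy
    rw [h0] at this
    simp at this
  -- orthogonality of the kernel on fibers
  have horth : ∀ y p q : X, φ p = y → φ q = y → p ≠ q →
      (∑ i, u i p * (starRingEnd ℂ) (u i q)) = 0 := by
    intro y p q hpy hqy hpq
    have hev := ContinuousMap.congr_fun (hqb (toC (bump y q))) p
    simp only [ContinuousMap.coe_sum, Finset.sum_apply, ContinuousMap.mul_apply,
      ContinuousMap.comp_apply, toC_apply, hpy] at hev
    rw [hbump0 y q p hpy hpq] at hev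
    have hin : ∀ i : Fin N, L (star (u i) * toC (bump y q)) y
        = (starRingEnd ℂ) (u i q) * m y q := by
      intro i
      rw [hdecomp y (star (u i) * toC (bump y q))]
      rw [Finset.sum_eq_single_of_mem q ((hfin y).mem_toFinset.2 hqy)]
      · simp [hbump1 y q hqy, RCLike.star_def]
      · intro z hz hne
        have hzy : φ z = y := by
          have := (hfin y).mem_toFinset.1 hz; exact this
        rw [ContinuousMap.mul_apply, toC_apply, hbump0 y q z hzy hne]
        simp
    rw [Finset.sum_congr rfl fun i _ => by rw [hin i]] at hev
    have : (∑ i : Fin N, u i p * ((starRingEnd ℂ) (u i q) * m y q))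
        = (∑ i, u i p * (starRingEnd ℂ) (u i q)) * m y q := by
      rw [Finset.sum_mul]
      exact Finset.sum_congr rfl fun i _ => by ring
    rw [this] at hev
    rcases mul_eq_zero.1 hev.symm with h | h
    · exact h
    · exact absurd h (hm_ne y q hqy)
  -- positivity of the kernel on the diagonal
  have hdiag : ∀ p : X, 0 < (∑ i, u i p * (starRingEnd ℂ) (u i p)).re := by
    intro p
    have hev := ContinuousMap.congr_fun (hqb (toC (bump (φ p) p))) p
    simp only [ContinuousMap.coe_sum, Finset.sum_apply, ContinuousMap.mul_apply,
      ContinuousMap.comp_apply, toC_apply] at hev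
    rw [hbump1 (φ p) p rfl] at hev
    have hin : ∀ i : Fin N, L (star (u i) * toC (bump (φ p) p)) (φ p)
        = (starRingEnd ℂ) (u i p) * m (φ p) p := by
      intro i
      rw [hdecomp (φ p) (star (u i) * toC (bump (φ p) p))]
      rw [Finset.sum_eq_single_of_mem p ((hfin (φ p)).mem_toFinset.2 rfl)]
      · simp [hbump1 (φ p) p rfl, RCLike.star_def]
      · intro z hz hne
        have hzy : φ z = φ p := (hfin (φ p)).mem_toFinset.1 hz
        rw [ContinuousMap.mul_apply, toC_apply, hbump0 (φ p) p z hzy hne]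
        simp
    rw [Finset.sum_congr rfl fun i _ => by rw [hin i]] at hev
    have hfact : (∑ i : Fin N, u i p * ((starRingEnd ℂ) (u i p) * m (φ p) p))
        = (∑ i, u i p * (starRingEnd ℂ) (u i p)) * m (φ p) p := by
      rw [Finset.sum_mul]; exact Finset.sum_congr rfl fun i _ => by ring
    rw [hfact] at hev
    have hKne : (∑ i, u i p * (starRingEnd ℂ) (u i p)) ≠ 0 := by
      intro h0
      rw [h0, zero_mul] at hev
      simp at hev
    have hKre : (∑ i, u i p * (starRingEnd ℂ) (u i p)).re
        = ∑ i, Complex.normSq (u i p) := by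
      rw [Complex.re_sum]
      exact Finset.sum_congr rfl fun i _ => by rw [Complex.mul_conj]; simp
    have hKim : (∑ i, u i p * (starRingEnd ℂ) (u i p)).im = 0 := by
      rw [Complex.im_sum]
      apply Finset.sum_eq_zero
      intro i _
      rw [Complex.mul_conj]; simp
    rw [hKre]
    rcases (Finset.sum_nonneg (fun i (_ : i ∈ Finset.univ) => Complex.normSq_nonneg (u i p))).lt_or_eq with h | h
    · exact h
    · exfalso
      apply hKne
      apply Complex.ext
      · rw [hKre, ← h]; simp
      · rw [hKim]; simp
  -- φ is an open map
  have hopen : IsOpenMap ⇑φ := by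
    intro U hU
    rw [isOpen_iff_mem_nhds]
    rintro y ⟨x, hxU, rfl⟩
    obtain ⟨a, h0, h1, h01⟩ := exists_continuous_zero_one_of_isClosed hU.isClosed_compl
      isClosed_singleton (Set.disjoint_singleton_right.mpr (fun h => h hxU))
    set W := {y' | 0 < (L (toC a) y').re} with hW
    have hWo : IsOpen W := isOpen_lt continuous_const
      (Complex.continuous_re.comp (L (toC a)).continuous)
    have hyW : φ x ∈ W := by
      show 0 < (L (toC a) (φ x)).re
      rw [hdecomp (φ x) (toC a)]
      rw [Complex.re_sum]
      apply Finset.sum_pos'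
      · intro z hz
        have hzy : φ z = φ x := (hfin (φ x)).mem_toFinset.1 hz
        rw [toC_apply, Complex.re_ofReal_mul]
        exact mul_nonneg (h01 z).1 (hm_re (φ x) z).1
      · refine ⟨x, (hfin (φ x)).mem_toFinset.2 rfl, ?_⟩
        have ha1 : a x = 1 := by simpa using h1 rfl
        rw [toC_apply, Complex.re_ofReal_mul, ha1, one_mul]
        exact hm_pos (φ x) x rfl
    have hWsub : W ⊆ ⇑φ '' U := by
      intro y' hy'
      by_contra hy'U
      have hzero : L (toC a) y' = 0 := by
        apply L_vanish hp hT hL1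
        intro w hw
        have hwU : w ∉ U := fun h => hy'U ⟨w, h, hw⟩
        rw [toC_apply, h0 hwU]; simp
      rw [hW, Set.mem_setOf_eq, hzero] at hy'
      simp at hy'
    exact Filter.mem_of_superset (hWo.mem_nhds hyW) hWsub
  -- conclude
  rw [isLocalHomeomorph_iff_isOpenEmbedding_restrict]
  intro x
  set k : X × X → ℂ := fun pq => ∑ i, u i pq.1 * (starRingEnd ℂ) (u i pq.2) with hk
  have hkc : Continuous k := by
    apply continuous_finset_sum
    intro i _
    exact (((u i).continuous.comp continuous_fst)).mul
      (continuous_star.comp ((u i).continuous.comp continuous_snd))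
  have hko : IsOpen {pq : X × X | 0 < (k pq).re} :=
    isOpen_lt continuous_const (Complex.continuous_re.comp hkc)
  have hxx : (x, x) ∈ {pq : X × X | 0 < (k pq).re} := hdiag x
  obtain ⟨S1, S2, hS1, hS2, hx1, hx2, hsub⟩ := isOpen_prod_iff.1 hko x x hxx
  refine ⟨S1 ∩ S2, (hS1.inter hS2).mem_nhds ⟨hx1, hx2⟩, ?_⟩
  apply Topology.IsOpenEmbedding.of_continuous_injective_isOpenMap
  · exact φ.continuous.comp continuous_subtype_val
  · rw [← Set.injOn_iff_injective]
    intro p hp' q hq' hpq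
    by_contra hne
    have h0 := horth (φ p) p q rfl hpq.symm hne
    have hmem : (p, q) ∈ S1 ×ˢ S2 := ⟨hp'.1, hq'.2⟩
    have hlt := hsub hmem
    rw [Set.mem_setOf_eq] at hlt
    have hkpq : k (↑p, ↑q) = 0 := h0
    rw [hkpq] at hlt
    simp at hlt
  · exact hopen.restrict (hS1.inter hS2)


end Forward

section Backward

variable [CompactSpace X] [T2Space X]

lemma backward (φ : C(X, X)) (hsurj : Function.Surjective ⇑φ)
    (hlh : IsLocalHomeomorph (⇑φ)) :
    ∃ (L : C(X, ℂ) →ₗ[ℂ] C(X, ℂ)) (N : ℕ) (u : Fin N → C(X, ℂ)),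
      (L 1 = 1 ∧ (∀ f : C(X, ℂ), (∀ x, 0 ≤ f x) → ∀ x, 0 ≤ (L f) x) ∧
        ∀ f g : C(X, ℂ), L (f.comp φ * g) = f * L g) ∧
      ∀ a : C(X, ℂ), a = ∑ i, u i * ((L (star (u i) * a)).comp φ) := by
  classical
  choose E hEmem hEeq using hlh
  obtain ⟨t, ht⟩ := IsCompact.elim_finite_subcover isCompact_univ
    (fun x => (E x).source) (fun x => (E x).open_source)
    (fun x _ => Set.mem_iUnion.2 ⟨x, hEmem x⟩)
  obtain ⟨ρ, hρ⟩ := PartitionOfUnity.exists_isSubordinate (ι := {x // x ∈ t}) (s := Set.univ)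
    isClosed_univ (fun i => (E ↑i).source) (fun i => (E ↑i).open_source)
    (fun x _ => by
      have hx := ht (Set.mem_univ x)
      rw [Set.mem_iUnion₂] at hx
      obtain ⟨i, hit, hx⟩ := hx
      exact Set.mem_iUnion.2 ⟨⟨i, hit⟩, hx⟩)
  have hρ0 : ∀ (i : {x // x ∈ t}) (x : X), 0 ≤ ρ i x := fun i x => ρ.nonneg i x
  have hρ1 : ∀ x : X, ∑ i : {x // x ∈ t}, ρ i x = 1 := fun x => by
    rw [← finsum_eq_sum_of_fintype]
    exact ρ.sum_eq_one (Set.mem_univ x)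
  have hsrc : ∀ (i : {x // x ∈ t}) (x : X), ρ i x ≠ 0 → x ∈ (E ↑i).source :=
    fun i x hx => hρ i (subset_tsupport _ hx)
  have hφeq : ∀ (i : {x // x ∈ t}) (x : X), φ x = (E ↑i) x := fun i x => congrFun (hEeq ↑i) x
  have hmaps : ∀ (i : {x // x ∈ t}) {x : X}, x ∈ (E ↑i).source →
      φ x ∈ (E ↑i).target ∧ (E ↑i).symm (φ x) = x := by
    intro i x hx
    rw [hφeq i x]
    exact ⟨(E ↑i).map_source hx, (E ↑i).left_inv hx⟩
  have hrinv : ∀ (i : {x // x ∈ t}) {y : X}, y ∈ (E ↑i).target → φ ((E ↑i).symm y) = y := by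
    intro i y hy
    rw [hφeq i _]
    exact (E ↑i).right_inv hy
  -- the building blocks of the transfer operator
  have contT : ∀ (i : {x // x ∈ t}) (f : C(X, ℂ)), Continuous (fun y =>
      if y ∈ (E ↑i).target then ((ρ i ((E ↑i).symm y) : ℝ) : ℂ) * f ((E ↑i).symm y) else 0) := by
    intro i f
    have hCcl : IsClosed (⇑φ '' tsupport (ρ i)) :=
      ((isClosed_tsupport _).isCompact.image φ.continuous).isClosed
    have hCsub : ⇑φ '' tsupport (ρ i) ⊆ (E ↑i).target := by
      rintro _ ⟨z, hz, rfl⟩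
      exact (hmaps i (hρ i hz)).1
    rw [continuous_iff_continuousAt]
    intro y
    by_cases hy : y ∈ (E ↑i).target
    · apply ContinuousOn.continuousAt ?_ ((E ↑i).open_target.mem_nhds hy)
      apply ContinuousOn.congr
        (f := fun y => ((ρ i ((E ↑i).symm y) : ℝ) : ℂ) * f ((E ↑i).symm y))
      · exact ((Complex.continuous_ofReal.comp (ρ i).continuous).comp_continuousOn
          (E ↑i).continuousOn_symm).mul (f.continuous.comp_continuousOn (E ↑i).continuousOn_symm)
      · intro y' hy'
        simp only [if_pos hy']
    · have hyC : y ∈ (⇑φ '' tsupport (ρ i))ᶜ := fun hC => hy (hCsub hC)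
      have hev : (fun y => if y ∈ (E ↑i).target
          then ((ρ i ((E ↑i).symm y) : ℝ) : ℂ) * f ((E ↑i).symm y) else 0)
          =ᶠ[nhds y] (fun _ => (0 : ℂ)) := by
        filter_upwards [hCcl.isOpen_compl.mem_nhds hyC] with y' hy'
        by_cases h' : y' ∈ (E ↑i).target
        · rw [if_pos h']
          have hz : ρ i ((E ↑i).symm y') = 0 := by
            by_contra hne
            exact hy' ⟨(E ↑i).symm y', subset_tsupport _ hne, hrinv i h'⟩
          rw [hz]
          simp
        · rw [if_neg h']
      exact (continuousAt_congr hev).2 continuousAt_const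
  set T : {x // x ∈ t} → C(X, ℂ) → C(X, ℂ) := fun i f => ⟨_, contT i f⟩ with hTdef
  have hTapp : ∀ i f y, T i f y = if y ∈ (E ↑i).target
      then ((ρ i ((E ↑i).symm y) : ℝ) : ℂ) * f ((E ↑i).symm y) else 0 := fun i f y => rfl
  set Dr : X → ℝ := fun y =>
    ∑ i : {x // x ∈ t}, (if y ∈ (E ↑i).target then ρ i ((E ↑i).symm y) else 0) with hDrdef
  have hDrC : ∀ y, ((Dr y : ℝ) : ℂ) = ∑ i : {x // x ∈ t}, T i 1 y := by
    intro y
    rw [hDrdef]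
    push_cast
    apply Finset.sum_congr rfl
    intro i _
    rw [hTapp]
    split_ifs with h <;> simp
  have hDrpos : ∀ y, 0 < Dr y := by
    intro y
    obtain ⟨x, rfl⟩ := hsurj y
    have h1 : ∑ i : {x // x ∈ t}, ρ i x = 1 := hρ1 x
    have hex : ∃ i : {x // x ∈ t}, ρ i x ≠ 0 := by
      by_contra hcon
      push_neg at hcon
      rw [Finset.sum_congr rfl fun i _ => hcon i] at h1
      simp at h1
    obtain ⟨i0, hi0⟩ := hex
    apply Finset.sum_pos'
    · intro i _
      split_ifs with h
      · exact hρ0 i _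
      · exact le_refl 0
    · refine ⟨i0, Finset.mem_univ _, ?_⟩
      have hx0 := hmaps i0 (hsrc i0 x hi0)
      rw [if_pos hx0.1, hx0.2]
      exact (hρ0 i0 x).lt_of_ne (Ne.symm hi0)
  have hDrcont : Continuous Dr := by
    have hc : Continuous fun y => (∑ i : {x // x ∈ t}, T i 1 y) :=
      continuous_finset_sum _ fun i _ => ((T i 1).continuous)
    have heq : Dr = fun y => (∑ i : {x // x ∈ t}, T i 1 y).re := by
      funext y
      rw [← hDrC]
      simp
    rw [heq]
    exact Complex.continuous_re.comp hc
  have hDrne : ∀ y, ((Dr y : ℝ) : ℂ) ≠ 0 := fun y => by exact_mod_cast (hDrpos y).ne'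
  -- the transfer operator
  set Lfun : C(X, ℂ) → C(X, ℂ) := fun f =>
    ⟨fun y => (∑ i : {x // x ∈ t}, T i f y) / ((Dr y : ℝ) : ℂ),
      (continuous_finset_sum _ fun i _ => (T i f).continuous).div
        (Complex.continuous_ofReal.comp hDrcont) hDrne⟩ with hLfun
  have hTaddp : ∀ i (f g : C(X, ℂ)) y, T i (f + g) y = T i f y + T i g y := by
    intro i f g y
    rw [hTapp, hTapp, hTapp]
    split_ifs with h
    · rw [ContinuousMap.add_apply, mul_add]
    · rw [add_zero]
  have hTsmul : ∀ i (c : ℂ) f y, T i (c • f) y = c * T i f y := by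
    intro i c f y
    rw [hTapp, hTapp]
    split_ifs with h
    · rw [ContinuousMap.smul_apply, smul_eq_mul]
      ring
    · rw [mul_zero]
  set L : C(X, ℂ) →ₗ[ℂ] C(X, ℂ) :=
    { toFun := Lfun
      map_add' := by
        intro f g
        ext y
        show Lfun (f + g) y = Lfun f y + Lfun g y
        rw [hLfun]
        simp only [ContinuousMap.coe_mk]
        rw [← add_div]
        congr 1
        rw [← Finset.sum_add_distrib]
        exact Finset.sum_congr rfl fun i _ => hTaddp i f g y
      map_smul' := by
        intro c f
        ext y
        show Lfun (c • f) y = c * Lfun f y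
        rw [hLfun]
        simp only [ContinuousMap.coe_mk]
        rw [← mul_div_assoc]
        congr 1
        rw [Finset.mul_sum]
        exact Finset.sum_congr rfl fun i _ => hTsmul i c f y } with hLdef
  have hLapp : ∀ f y, L f y = (∑ i : {x // x ∈ t}, T i f y) / ((Dr y : ℝ) : ℂ) :=
    fun f y => rfl
  have hL1 : L 1 = 1 := by
    ext y
    rw [hLapp 1 y, ← hDrC, div_self (hDrne y), ContinuousMap.one_apply]
  have hLpos : ∀ f : C(X, ℂ), (∀ x, 0 ≤ f x) → ∀ y, 0 ≤ L f y := by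
    intro f hf y
    rw [hLapp]
    have hsum : 0 ≤ (∑ i : {x // x ∈ t}, T i f y).re ∧ (∑ i : {x // x ∈ t}, T i f y).im = 0 := by
      constructor
      · rw [Complex.re_sum]
        apply Finset.sum_nonneg
        intro i _
        rw [hTapp]
        split_ifs with h
        · rw [Complex.re_ofReal_mul]
          exact mul_nonneg (hρ0 i _) (Complex.nonneg_iff.1 (hf _)).1
        · simp
      · rw [Complex.im_sum]
        apply Finset.sum_eq_zero
        intro i _
        rw [hTapp]
        split_ifs with h
        · rw [Complex.im_ofReal_mul, ← (Complex.nonneg_iff.1 (hf _)).2, mul_zero]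
        · simp
    rw [Complex.nonneg_iff]
    constructor
    · rw [Complex.div_ofReal_re]
      exact div_nonneg hsum.1 (hDrpos y).le
    · rw [Complex.div_ofReal_im, hsum.2, zero_div]
  have hLtrans : ∀ f g : C(X, ℂ), L (f.comp φ * g) = f * L g := by
    intro f g
    ext y
    rw [ContinuousMap.mul_apply, hLapp, hLapp, ← mul_div_assoc]
    congr 1
    rw [Finset.mul_sum]
    apply Finset.sum_congr rfl
    intro i _
    rw [hTapp, hTapp]
    split_ifs with h
    · rw [ContinuousMap.mul_apply, ContinuousMap.comp_apply, hrinv i h]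
      ring
    · rw [mul_zero]
  -- the quasi-basis
  set w : {x // x ∈ t} → C(X, ℝ) := fun i =>
    ⟨fun x => Real.sqrt (ρ i x * Dr (φ x)),
      Real.continuous_sqrt.comp ((ρ i).continuous.mul (hDrcont.comp φ.continuous))⟩ with hwdef
  have hwapp : ∀ i x, w i x = Real.sqrt (ρ i x * Dr (φ x)) := fun i x => rfl
  have hker : ∀ x z : X, φ z = φ x →
      (∑ i : {x // x ∈ t}, w i x * w i z) = if z = x then Dr (φ x) else 0 := by
    intro x z hzx
    by_cases hzx' : z = x
    · subst hzx'
      rw [if_pos rfl]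
      have hterm : ∀ i : {x // x ∈ t}, w i z * w i z = ρ i z * Dr (φ z) := fun i =>
        Real.mul_self_sqrt (mul_nonneg (hρ0 i z) (hDrpos _).le)
      rw [Finset.sum_congr rfl fun i _ => hterm i, ← Finset.sum_mul, hρ1, one_mul]
    · rw [if_neg hzx']
      apply Finset.sum_eq_zero
      intro i _
      rcases eq_or_ne (ρ i x) 0 with h | h
      · rw [hwapp i x, h, zero_mul, Real.sqrt_zero, zero_mul]
      · have h2 : ρ i z = 0 := by
          by_contra h2
          apply hzx'
          have hxs : x ∈ (E ↑i).source := hsrc i x h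
          have hzs : z ∈ (E ↑i).source := hsrc i z h2
          apply (E ↑i).injOn hzs hxs
          rw [← hφeq i z, ← hφeq i x]
          exact hzx
        rw [hwapp i z, h2, zero_mul, Real.sqrt_zero, mul_zero]
  have hkerC : ∀ x z : X, φ z = φ x →
      (∑ i : {x // x ∈ t}, ((w i x : ℝ) : ℂ) * ((w i z : ℝ) : ℂ))
        = if z = x then ((Dr (φ x) : ℝ) : ℂ) else 0 := by
    intro x z hzx
    calc (∑ i : {x // x ∈ t}, ((w i x : ℝ) : ℂ) * ((w i z : ℝ) : ℂ))
        = (((∑ i : {x // x ∈ t}, w i x * w i z : ℝ)) : ℂ) := by push_cast; rfl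
      _ = _ := by rw [hker x z hzx]; split_ifs <;> simp
  refine ⟨L, t.card, fun j => toC (w (t.equivFin.symm j)), ⟨hL1, hLpos, hLtrans⟩, ?_⟩
  intro a
  ext x
  rw [ContinuousMap.coe_sum, Finset.sum_apply]
  have hstar : ∀ i : {x // x ∈ t}, star (toC (w i)) = toC (w i) := by
    intro i
    ext z
    simp only [ContinuousMap.star_apply, toC_apply, RCLike.star_def, Complex.conj_ofReal]
  have hsum := Equiv.sum_comp t.equivFin.symm
    (fun i => (toC (w i) * ((L (star (toC (w i)) * a)).comp φ)) x)
  rw [hsum]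
  -- now compute over the subtype index
  have hterm : ∀ i : {x // x ∈ t}, (toC (w i) * ((L (star (toC (w i)) * a)).comp φ)) x
      = ((w i x : ℝ) : ℂ) * ((∑ j : {x // x ∈ t}, T j (toC (w i) * a) (φ x)) / ((Dr (φ x) : ℝ) : ℂ)) := by
    intro i
    rw [ContinuousMap.mul_apply, ContinuousMap.comp_apply, hstar i, hLapp, toC_apply]
  rw [Finset.sum_congr rfl fun i _ => hterm i]
  have hstep1 : (∑ i : {x // x ∈ t}, ((w i x : ℝ) : ℂ)
        * ((∑ j : {x // x ∈ t}, T j (toC (w i) * a) (φ x)) / ((Dr (φ x) : ℝ) : ℂ)))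
      = (∑ j : {x // x ∈ t}, ∑ i : {x // x ∈ t}, ((w i x : ℝ) : ℂ)
        * T j (toC (w i) * a) (φ x)) / ((Dr (φ x) : ℝ) : ℂ) := by
    have hstep0 : ∀ i : {x // x ∈ t}, ((w i x : ℝ) : ℂ)
        * ((∑ j : {x // x ∈ t}, T j (toC (w i) * a) (φ x)) / ((Dr (φ x) : ℝ) : ℂ))
        = (∑ j : {x // x ∈ t}, ((w i x : ℝ) : ℂ) * T j (toC (w i) * a) (φ x))
          / ((Dr (φ x) : ℝ) : ℂ) := by
      intro i
      rw [← mul_div_assoc, Finset.mul_sum]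
    rw [Finset.sum_congr rfl fun i _ => hstep0 i, ← Finset.sum_div, Finset.sum_comm]
  rw [hstep1]
  have hstep2 : ∀ j : {x // x ∈ t},
      (∑ i : {x // x ∈ t}, ((w i x : ℝ) : ℂ) * T j (toC (w i) * a) (φ x))
        = ((ρ j x : ℝ) : ℂ) * (a x * ((Dr (φ x) : ℝ) : ℂ)) := by
    intro j
    by_cases hj : φ x ∈ (E ↑j).target
    · set z := (E ↑j).symm (φ x) with hzdef
      have hφz : φ z = φ x := hrinv j hj
      have hinner : (∑ i : {x // x ∈ t}, ((w i x : ℝ) : ℂ) * T j (toC (w i) * a) (φ x))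
          = ((ρ j z : ℝ) : ℂ) * a z * (∑ i : {x // x ∈ t}, ((w i x : ℝ) : ℂ) * ((w i z : ℝ) : ℂ)) := by
        rw [Finset.mul_sum]
        apply Finset.sum_congr rfl
        intro i _
        rw [hTapp, if_pos hj, ContinuousMap.mul_apply, toC_apply, ← hzdef]
        ring
      rw [hinner, hkerC x z hφz]
      by_cases hzx : z = x
      · rw [if_pos hzx, hzx]
        ring
      · rw [if_neg hzx, mul_zero]
        -- in this case ρ j x = 0
        have hρjx : ρ j x = 0 := by
          by_contra hne
          apply hzx
          have hx0 := hmaps j (hsrc j x hne)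
          rw [hzdef, hx0.2]
        rw [hρjx]
        simp
    · have hz : ∀ i : {x // x ∈ t}, T j (toC (w i) * a) (φ x) = 0 := by
        intro i
        rw [hTapp, if_neg hj]
      rw [Finset.sum_congr rfl fun i _ => by rw [hz i, mul_zero]]
      have hρjx : ρ j x = 0 := by
        by_contra hne
        exact hj (hmaps j (hsrc j x hne)).1
      rw [hρjx]
      simp
  rw [Finset.sum_congr rfl fun j _ => hstep2 j]
  rw [← Finset.sum_mul]
  have hone : (∑ j : {x // x ∈ t}, ((ρ j x : ℝ) : ℂ)) = 1 := by
    rw [← Complex.ofReal_sum, hρ1]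
    simp
  rw [hone, one_mul, mul_div_assoc, div_self (hDrne (φ x)), mul_one]

end Backward

end Stmt3Aux


/-- the endomorphism `α_φ(a) = a ∘ φ` of `C(X)` is of finite type
(there is a transfer operator for it admitting a quasi-basis) iff `φ` is a local
homeomorphism. -/
theorem stmt3 {X : Type*} [TopologicalSpace X] [CompactSpace X] [T2Space X]
    (φ : C(X, X)) (hsurj : Function.Surjective φ) :
    (∃ (L : C(X, ℂ) →ₗ[ℂ] C(X, ℂ)) (N : ℕ) (u : Fin N → C(X, ℂ)),
        IsTransferOpC φ L ∧
        ∀ a : C(X, ℂ), a = ∑ i, u i * ((L (star (u i) * a)).comp φ)) ↔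
      IsLocalHomeomorph (⇑φ) := by
  constructor
  · rintro ⟨L, N, u, ⟨hL1, hp, hT⟩, hqb⟩
    exact Stmt3Aux.forward φ L N u hL1 hp hT hqb
  · intro hlh
    obtain ⟨L, N, u, ⟨hL1, hp, hT⟩, hqb⟩ := Stmt3Aux.backward φ hsurj hlh
    exact ⟨L, N, u, ⟨hL1, hp, hT⟩, hqb⟩
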